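/- For every α > 1 and every x ∈ ℝ with |x| ≥ 1, one has ∫_ℝ (1+|x|^α) / ((1+|y+x/2|^α)(1+|y−x/2|^α)) dy ≤ 2^{α+2} ∫_0^∞ dz/(1+z^α), and the right-hand side is a finite constant independent of x. -/

import Mathlib

open Real MeasureTheory Set

lemma fint (α : ℝ) (hα : 1 < α) :
    IntegrableOn (fun z : ℝ => (1 + z ^ α)⁻¹) (Set.Ioi (0 : ℝ)) := by
  have hmeas : Measurable (fun z : ℝ => (1 + z ^ α)⁻¹) := by fun_prop
  have h1 : IntegrableOn (fun z : ℝ => (1 + z ^ α)⁻¹) (Ioc (0:ℝ) 1) := by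
    refine Measure.integrableOn_of_bounded (M := 1) (by simp) hmeas.aestronglyMeasurable ?_
    · filter_upwards [self_mem_ae_restrict measurableSet_Ioc] with z hz
      have h0 : (0:ℝ) ≤ z ^ α := Real.rpow_nonneg hz.1.le α
      rw [Real.norm_eq_abs, abs_of_nonneg (by positivity)]
      rw [inv_le_one_iff₀]
      right
      linarith
  have h2 : IntegrableOn (fun z : ℝ => (1 + z ^ α)⁻¹) (Ioi (1:ℝ)) := by
    refine (integrableOn_Ioi_rpow_of_lt (by linarith : -α < -1) one_pos).mono'
      hmeas.aestronglyMeasurable ?_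
    filter_upwards [self_mem_ae_restrict measurableSet_Ioi] with z hz
    have hz0 : (0:ℝ) < z := lt_trans one_pos hz
    rw [Real.norm_eq_abs, abs_of_nonneg (by positivity), Real.rpow_neg hz0.le]
    have : (0:ℝ) < z ^ α := Real.rpow_pos_of_pos hz0 α
    apply inv_anti₀ this
    linarith
  have : Ioi (0:ℝ) ⊆ Ioc 0 1 ∪ Ioi 1 := by
    intro z hz
    rcases le_or_gt z 1 with h | h
    · exact Or.inl ⟨hz, h⟩
    · exact Or.inr h
  exact (h1.union h2).mono_set this

lemma fint2 (α : ℝ) (hα : 1 < α) :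
    Integrable (fun y : ℝ => (1 + |y| ^ α)⁻¹) := by
  have hIoi : IntegrableOn (fun y : ℝ => (1 + |y| ^ α)⁻¹) (Ioi 0) := by
    refine (fint α hα).congr_fun ?_ measurableSet_Ioi
    intro y hy
    simp [abs_of_pos (mem_Ioi.mp hy)]
  have hIic : IntegrableOn (fun y : ℝ => (1 + |y| ^ α)⁻¹) (Iic 0) := by
    rw [← Measure.map_neg_eq_self (volume : Measure ℝ)]
    have m : MeasurableEmbedding fun x : ℝ => -x := (Homeomorph.neg ℝ).measurableEmbedding
    rw [m.integrableOn_map_iff]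
    simp_rw [Function.comp_def, abs_neg, neg_preimage, neg_Iic, neg_zero]
    exact (integrableOn_Ici_iff_integrableOn_Ioi enorm_ne_top).mpr hIoi
  have := hIic.union hIoi
  rwa [Iic_union_Ioi, integrableOn_univ] at this

-- pointwise bound
lemma pointwise (α : ℝ) (hα : 1 < α) (x y : ℝ) :
    (1 + |x| ^ α) / ((1 + |y + x / 2| ^ α) * (1 + |y - x / 2| ^ α)) ≤
      (2:ℝ) ^ α * ((1 + |y + x / 2| ^ α)⁻¹ + (1 + |y - x / 2| ^ α)⁻¹) := by
  set a := y + x / 2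
  set b := y - x / 2
  have hax : x = a - b := by ring
  have hA : (0:ℝ) < 1 + |a| ^ α := by positivity
  have hB : (0:ℝ) < 1 + |b| ^ α := by positivity
  have h2α : (1:ℝ) ≤ 2 ^ α := Real.one_le_rpow one_le_two (by linarith)
  have key : 1 + |x| ^ α ≤ 2 ^ α * ((1 + |a| ^ α) + (1 + |b| ^ α)) := by
    have hxab : |x| ≤ 2 * max |a| |b| := by
      rw [hax]
      calc |a - b| ≤ |a| + |b| := abs_sub _ _
        _ ≤ 2 * max |a| |b| := by
            rcases le_total |a| |b| with h | h <;> simp [max_eq_right, max_eq_left, h] <;> linarith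
    have h1 : |x| ^ α ≤ (2 * max |a| |b|) ^ α :=
      Real.rpow_le_rpow (abs_nonneg x) hxab (by linarith)
    have h2 : (2 * max |a| |b|) ^ α = 2 ^ α * (max |a| |b|) ^ α :=
      Real.mul_rpow (by norm_num) (le_max_of_le_left (abs_nonneg a))
    have h3 : (max |a| |b|) ^ α ≤ |a| ^ α + |b| ^ α := by
      rcases le_total |a| |b| with h | h
      · rw [max_eq_right h]
        have := Real.rpow_nonneg (abs_nonneg a) α
        linarith
      · rw [max_eq_left h]
        have := Real.rpow_nonneg (abs_nonneg b) α
        linarith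
    have h4 : |x| ^ α ≤ 2 ^ α * (|a| ^ α + |b| ^ α) := by
      calc |x| ^ α ≤ 2 ^ α * (max |a| |b|) ^ α := by rw [← h2]; exact h1
        _ ≤ 2 ^ α * (|a| ^ α + |b| ^ α) := by
            apply mul_le_mul_of_nonneg_left h3 (by positivity)
    nlinarith
  rw [div_le_iff₀ (by positivity)]
  have expand : (2:ℝ) ^ α * ((1 + |a| ^ α)⁻¹ + (1 + |b| ^ α)⁻¹) * ((1 + |a| ^ α) * (1 + |b| ^ α))
      = 2 ^ α * ((1 + |b| ^ α) + (1 + |a| ^ α)) := by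
    field_simp
  rw [expand]
  linarith


/-- For `α > 1` and `|x| ≥ 1`,
`∫_ℝ (1+|x|^α) / ((1+|y+x/2|^α)(1+|y−x/2|^α)) dy ≤ 2^{α+2} ∫_0^∞ dz/(1+z^α)`,
and the right-hand side is a finite constant independent of `x`
(the integrand `z ↦ (1+z^α)⁻¹` is integrable on `(0,∞)` since `α > 1`). -/
theorem statement_13 (α : ℝ) (hα : 1 < α) (x : ℝ) (hx : 1 ≤ |x|) :
    (∫ y : ℝ, (1 + |x| ^ α) / ((1 + |y + x / 2| ^ α) * (1 + |y - x / 2| ^ α))) ≤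
      (2 : ℝ) ^ (α + 2) * ∫ z in Set.Ioi (0 : ℝ), (1 + z ^ α)⁻¹ ∧
    IntegrableOn (fun z : ℝ => (1 + z ^ α)⁻¹) (Set.Ioi (0 : ℝ)) := by
  refine ⟨?_, fint α hα⟩
  have hbase : Integrable (fun y : ℝ => (1 + |y| ^ α)⁻¹) := fint2 α hα
  have hI1 : Integrable (fun y : ℝ => (1 + |y + x / 2| ^ α)⁻¹) := by
    have := hbase.comp_add_right (x / 2)
    simpa using this
  have hI2 : Integrable (fun y : ℝ => (1 + |y - x / 2| ^ α)⁻¹) := by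
    have := hbase.comp_sub_right (x / 2)
    simpa using this
  have hg : Integrable (fun y : ℝ =>
      (2:ℝ) ^ α * ((1 + |y + x / 2| ^ α)⁻¹ + (1 + |y - x / 2| ^ α)⁻¹)) :=
    ((hI1.add hI2).const_mul _)
  have hmono : (∫ y : ℝ, (1 + |x| ^ α) / ((1 + |y + x / 2| ^ α) * (1 + |y - x / 2| ^ α))) ≤
      ∫ y : ℝ, (2:ℝ) ^ α * ((1 + |y + x / 2| ^ α)⁻¹ + (1 + |y - x / 2| ^ α)⁻¹) := by
    refine integral_mono_of_nonneg ?_ hg ?_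
    · filter_upwards with y
      positivity
    · filter_upwards with y
      exact pointwise α hα x y
  refine hmono.trans (le_of_eq ?_)
  rw [integral_const_mul, integral_add hI1 hI2]
  have e1 : (∫ y : ℝ, (1 + |y + x / 2| ^ α)⁻¹) = ∫ y : ℝ, (1 + |y| ^ α)⁻¹ := by
    exact integral_add_right_eq_self (μ := volume) (fun y => (1 + |y| ^ α)⁻¹) (x / 2)
  have e2 : (∫ y : ℝ, (1 + |y - x / 2| ^ α)⁻¹) = ∫ y : ℝ, (1 + |y| ^ α)⁻¹ := by
    exact integral_sub_right_eq_self (μ := volume) (fun y => (1 + |y| ^ α)⁻¹) (x / 2)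
  have e3 : (∫ y : ℝ, (1 + |y| ^ α)⁻¹) = 2 * ∫ z in Ioi (0:ℝ), (1 + z ^ α)⁻¹ :=
    integral_comp_abs (f := fun z => (1 + z ^ α)⁻¹)
  rw [e1, e2, e3]
  rw [Real.rpow_add two_pos]
  norm_num
  ring
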